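/- Let ρ̂: ℝ^n → ℝ be a coherent risk estimator that is additionally permutation-invariant (law-invariant). Then there exists a nonempty convex set M^s ⊆ Δ_n^↓ such that ρ̂(x) = sup_{a∈M^s} ∑_{i=1}^n a_i(−x_{i:n}) for all x, with the supremum attained. -/

import Mathlib

/-- The `i`-th order statistic (`i`-th smallest coordinate, `i = 1,…,n`) of `x ∈ ℝ^n`. -/
noncomputable def orderStat {n : ℕ} (x : Fin n → ℝ) (i : ℕ) : ℝ :=
  ((Finset.univ.val.map x).sort (· ≤ ·)).getD (i - 1) 0

/-- Every law-invariant (permutation-invariant) coherent risk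
estimator is the attained supremum of L-functionals over a nonempty convex set
of non-increasing probability vectors. -/

lemma CRE_functional {n : ℕ} (ρ : (Fin n → ℝ) → ℝ)
    (h_mono : ∀ x y : Fin n → ℝ, (∀ i, x i ≤ y i) → ρ y ≤ ρ x)
    (h_cash : ∀ (x : Fin n → ℝ) (m : ℝ), ρ (fun i => x i + m) = ρ x - m)
    (h_hom : ∀ (x : Fin n → ℝ) (l : ℝ), 0 ≤ l → ρ (fun i => l * x i) = l * ρ x)
    (h_sub : ∀ x y : Fin n → ℝ, ρ (fun i => x i + y i) ≤ ρ x + ρ y)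
    (w : Fin n → ℝ) (hw : w ≠ 0) :
    ∃ a : Fin n → ℝ, (∀ i, 0 ≤ a i) ∧ (∑ i, a i = 1) ∧
      (∀ z, ∑ i, a i * (-(z i)) ≤ ρ z) ∧ ∑ i, a i * (-(w i)) = ρ w := by
  classical
  have hρ0 : ρ 0 = 0 := by
    have := h_hom 0 0 le_rfl
    simp at this; exact this
  have N_hom : ∀ c : ℝ, 0 < c → ∀ z : Fin n → ℝ, ρ (c • z) = c * ρ z := by
    intro c hc z
    have := h_hom z c hc.le
    simpa [Pi.smul_def, smul_eq_mul] using this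
  have N_add : ∀ x y : Fin n → ℝ, ρ (x + y) ≤ ρ x + ρ y := by
    intro x y
    have := h_sub x y
    simpa [Pi.add_def] using this
  have hf : ∀ z : (LinearPMap.mkSpanSingleton w (ρ w) hw : (Fin n → ℝ) →ₗ.[ℝ] ℝ).domain,
      (LinearPMap.mkSpanSingleton w (ρ w) hw : (Fin n → ℝ) →ₗ.[ℝ] ℝ) z ≤ ρ z := by
    rintro ⟨z, hz⟩
    rcases Submodule.mem_span_singleton.1 hz with ⟨c, rfl⟩
    rw [LinearPMap.mkSpanSingleton'_apply]
    rcases le_or_gt 0 c with hc | hc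
    · have := h_hom w c hc
      have h2 : ρ (c • w) = c * ρ w := by simpa [Pi.smul_def, smul_eq_mul] using this
      rw [h2]; simp [smul_eq_mul]
    · have h1 : ρ (fun i => (c • w) i + ((-c) • w) i) ≤ ρ (c • w) + ρ ((-c) • w) :=
        h_sub _ _
      have h2 : (fun i => (c • w) i + ((-c) • w) i) = (0 : Fin n → ℝ) := by
        funext i; simp [smul_eq_mul]
      have h3 : ρ ((-c) • w) = (-c) * ρ w := by
        have := h_hom w (-c) (by linarith)
        exact this
      rw [h2, hρ0, h3] at h1
      simp only [smul_eq_mul, RingHom.id_apply]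
      linarith
  obtain ⟨g, hg1, hg2⟩ := exists_extension_of_le_sublinear _ ρ N_hom N_add hf
  have hgw : g w = ρ w := by
    have := hg1 ⟨w, Submodule.mem_span_singleton_self w⟩
    rw [LinearPMap.mkSpanSingleton_apply] at this
    exact this
  set a : Fin n → ℝ := fun i => -(g (Pi.single i 1)) with ha_def
  have hgz : ∀ z : Fin n → ℝ, g z = ∑ i, a i * (-(z i)) := by
    intro z
    have hz : ∑ i, z i • (Pi.single i 1 : Fin n → ℝ) = z := by
      have : ∀ i : Fin n, z i • (Pi.single i 1 : Fin n → ℝ) = Pi.single i (z i) := by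
        intro i; funext j
        by_cases h : j = i <;> simp [Pi.single_apply, h]
      rw [Finset.sum_congr rfl fun i _ => this i, Finset.univ_sum_single]
    calc g z = g (∑ i, z i • (Pi.single i 1 : Fin n → ℝ)) := by rw [hz]
      _ = ∑ i, z i • g ((Pi.single i 1 : Fin n → ℝ)) := by rw [map_sum]; simp
      _ = ∑ i, a i * (-(z i)) := by
          refine Finset.sum_congr rfl fun i _ => ?_
          simp [ha_def, smul_eq_mul]; ring
  have ha_nonneg : ∀ i, 0 ≤ a i := by
    intro i
    have h1 : ρ (Pi.single i 1) ≤ ρ 0 := by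
      apply h_mono
      intro j
      classical
      rw [Pi.single_apply]
      split <;> norm_num
    have h2 := hg2 (Pi.single i 1)
    simp only [ha_def]
    rw [hρ0] at h1
    linarith
  have hbound : ∀ z, ∑ i, a i * (-(z i)) ≤ ρ z := fun z => (hgz z) ▸ hg2 z
  have hsum : ∑ i, a i = 1 := by
    have key : ∀ m : ℝ, -(m * ∑ i, a i) ≤ -m := by
      intro m
      have h1 := hbound (fun _ => m)
      have h2 : ρ (fun _ : Fin n => m) = -m := by
        have := h_cash 0 m
        simpa [hρ0] using this
      rw [h2] at h1
      calc -(m * ∑ i, a i) = ∑ i, a i * (-m) := by rw [← Finset.sum_mul]; ring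
        _ ≤ -m := h1
    have k1 := key 1
    have k2 := key (-1)
    linarith
  exact ⟨a, ha_nonneg, hsum, hbound, (hgz w).symm.trans hgw⟩


lemma univ_val_map_eq_ofFn {n : ℕ} (x : Fin n → ℝ) :
    Finset.univ.val.map x = (List.ofFn x : List ℝ) := by
  rw [List.ofFn_eq_map]
  rfl

lemma orderStat_monotone_eq {n : ℕ} (x : Fin n → ℝ) (hx : Monotone x) (i : Fin n) :
    orderStat x (i + 1) = x i := by
  have hperm : ((Finset.univ.val.map x).sort (· ≤ ·)).Perm (List.ofFn x) := by
    rw [← Multiset.coe_eq_coe, Multiset.sort_eq, univ_val_map_eq_ofFn]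
  have heq : ((Finset.univ.val.map x).sort (· ≤ ·)) = List.ofFn x :=
    List.Perm.eq_of_pairwise' (Multiset.pairwise_sort _ _) hx.sortedLE_ofFn.pairwise hperm
  have hi : (i : ℕ) + 1 - 1 = (i : ℕ) := rfl
  rw [orderStat, hi, heq]
  rw [List.getD_eq_getElem _ _ (by simp [i.isLt])]
  simp

lemma orderStat_comp_perm {n : ℕ} (x : Fin n → ℝ) (σ : Equiv.Perm (Fin n)) :
    orderStat (x ∘ σ) = orderStat x := by
  have h : Finset.univ.val.map (x ∘ σ) = Finset.univ.val.map x := by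
    have h1 : Finset.univ.val.map (⇑σ) = Finset.univ.val := by
      have := Finset.map_univ_equiv σ
      calc Finset.univ.val.map (⇑σ) = (Finset.univ.map σ.toEmbedding).val := rfl
        _ = Finset.univ.val := by rw [this]
    calc Finset.univ.val.map (x ∘ σ) = (Finset.univ.val.map (⇑σ)).map x := by
          rw [Multiset.map_map]
        _ = Finset.univ.val.map x := by rw [h1]
  funext i
  rw [orderStat, orderStat, h]

theorem law_invariant_CRE_representation (n : ℕ) (ρ : (Fin n → ℝ) → ℝ)
    (h_mono : ∀ x y : Fin n → ℝ, (∀ i, x i ≤ y i) → ρ y ≤ ρ x)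
    (h_cash : ∀ (x : Fin n → ℝ) (m : ℝ), ρ (fun i => x i + m) = ρ x - m)
    (h_hom : ∀ (x : Fin n → ℝ) (l : ℝ), 0 ≤ l → ρ (fun i => l * x i) = l * ρ x)
    (h_sub : ∀ x y : Fin n → ℝ, ρ (fun i => x i + y i) ≤ ρ x + ρ y)
    (h_law : ∀ (x : Fin n → ℝ) (σ : Equiv.Perm (Fin n)), ρ (x ∘ σ) = ρ x) :
    ∃ Ms : Set (Fin n → ℝ), Ms.Nonempty ∧ Convex ℝ Ms ∧
      (∀ a ∈ Ms, (∀ i, 0 ≤ a i) ∧ (∀ i j : Fin n, i ≤ j → a j ≤ a i) ∧ ∑ i, a i = 1) ∧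
      ∀ x : Fin n → ℝ, ∃ a ∈ Ms,
        ρ x = ∑ i : Fin n, a i * (-(orderStat x (i + 1))) ∧
          ∀ b ∈ Ms, ∑ i : Fin n, b i * (-(orderStat x (i + 1))) ≤ ρ x := by
  classical
  rcases Nat.eq_zero_or_pos n with hn | hn
  · exfalso
    have h := h_cash 0 1
    have h0 : (fun i : Fin n => (0 : Fin n → ℝ) i + 1) = 0 := by
      subst hn; funext i; exact absurd i.2 (Nat.not_lt_zero _)
    rw [h0] at h; linarith
  have hρ0 : ρ 0 = 0 := by
    have := h_hom 0 0 le_rfl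
    simp at this; exact this
  set Ms : Set (Fin n → ℝ) := {a | (∀ i, 0 ≤ a i) ∧ (∀ i j : Fin n, i ≤ j → a j ≤ a i) ∧
      (∑ i, a i = 1) ∧
      ∀ y : Fin n → ℝ, ∑ i : Fin n, a i * (-(orderStat y (i + 1))) ≤ ρ y} with hMs
  -- key construction
  have key : ∀ w : Fin n → ℝ, Monotone w → w ≠ 0 →
      ∃ b ∈ Ms, ρ w = ∑ i : Fin n, b i * (-(orderStat w (i + 1))) := by
    intro w hwmono hw
    obtain ⟨a, ha0, hasum, habd, haeq⟩ :=
      CRE_functional ρ h_mono h_cash h_hom h_sub w hw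
    set π : Equiv.Perm (Fin n) := Fin.revPerm.trans (Tuple.sort a) with hπ
    set b : Fin n → ℝ := fun i => a (π i) with hb
    have hb0 : ∀ i, 0 ≤ b i := fun i => ha0 _
    have hbmono : ∀ i j : Fin n, i ≤ j → b j ≤ b i := by
      intro i j hij
      have h1 : Fin.rev j ≤ Fin.rev i := Fin.rev_le_rev.mpr hij
      have h2 := Tuple.monotone_sort a h1
      simpa [hb, hπ, Equiv.trans_apply, Function.comp] using h2
    have hbsum : ∑ i, b i = 1 := by
      rw [hb]
      rw [Equiv.sum_comp π a]
      exact hasum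
    have hbbd : ∀ y : Fin n → ℝ, ∑ i : Fin n, b i * (-(orderStat y (i + 1))) ≤ ρ y := by
      intro y
      set wy : Fin n → ℝ := y ∘ Tuple.sort y with hwy
      have hwymono : Monotone wy := Tuple.monotone_sort y
      have hosy : ∀ i : Fin n, orderStat y (i + 1) = wy i := by
        intro i
        rw [← orderStat_comp_perm y (Tuple.sort y)]
        exact orderStat_monotone_eq _ hwymono i
      have hre2 : ∑ i : Fin n, b i * (-(wy i)) = ∑ j, a j * (-((wy ∘ ⇑π.symm) j)) := by
        rw [← Equiv.sum_comp π (fun j => a j * (-((wy ∘ ⇑π.symm) j)))]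
        exact Finset.sum_congr rfl fun i _ => by simp [hb]
      have hρy : ρ (wy ∘ ⇑π.symm) = ρ y := by
        have hcomp : wy ∘ ⇑π.symm = y ∘ ⇑(π.symm.trans (Tuple.sort y)) := by
          funext k; simp [hwy, Equiv.trans_apply, Function.comp]
        rw [hcomp, h_law y (π.symm.trans (Tuple.sort y))]
      calc ∑ i : Fin n, b i * (-(orderStat y (i + 1)))
          = ∑ i : Fin n, b i * (-(wy i)) := by
            exact Finset.sum_congr rfl fun i _ => by rw [hosy i]
        _ = ∑ j, a j * (-((wy ∘ ⇑π.symm) j)) := hre2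
        _ ≤ ρ (wy ∘ ⇑π.symm) := habd _
        _ = ρ y := hρy
    have hbM : b ∈ Ms := ⟨hb0, hbmono, hbsum, hbbd⟩
    refine ⟨b, hbM, ?_⟩
    have hosw : ∀ i : Fin n, orderStat w (i + 1) = w i :=
      fun i => orderStat_monotone_eq w hwmono i
    have hle : ∑ i : Fin n, b i * (-(orderStat w (i + 1))) ≤ ρ w := hbbd w
    have hge : ρ w ≤ ∑ i : Fin n, b i * (-(orderStat w (i + 1))) := by
      have hbant : Antitone b := fun i j h => hbmono i j h
      have hnw : Antitone (fun i : Fin n => -(w i)) := fun i j h => neg_le_neg (hwmono h)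
      have hmv := hbant.monovary hnw
      have hre := hmv.sum_comp_perm_smul_le_sum_smul (σ := π.symm)
      have h1 : ∑ i, b (π.symm i) * (-(w i)) ≤ ∑ i, b i * (-(w i)) := by
        simpa [smul_eq_mul] using hre
      have h2 : ∀ i, b (π.symm i) = a i := by
        intro i; simp [hb]
      calc ρ w = ∑ i, a i * (-(w i)) := haeq.symm
        _ = ∑ i, b (π.symm i) * (-(w i)) := by
            exact Finset.sum_congr rfl fun i _ => by rw [h2 i]
        _ ≤ ∑ i, b i * (-(w i)) := h1
        _ = ∑ i : Fin n, b i * (-(orderStat w (i + 1))) := by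
            exact Finset.sum_congr rfl fun i _ => by rw [hosw i]
    exact le_antisymm hge hle
  -- nonemptiness
  have hne : Ms.Nonempty := by
    obtain ⟨b, hbM, _⟩ := key (fun _ => 1) monotone_const (by
      intro h
      have := congrFun h ⟨0, hn⟩
      norm_num at this)
    exact ⟨b, hbM⟩
  -- convexity
  have hconv : Convex ℝ Ms := by
    intro a ha c hc p q hp hq hpq
    obtain ⟨ha0, ha1, ha2, ha3⟩ := ha
    obtain ⟨hc0, hc1, hc2, hc3⟩ := hc
    have happ : ∀ i, (p • a + q • c) i = p * a i + q * c i := by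
      intro i; simp [smul_eq_mul]
    refine ⟨?_, ?_, ?_, ?_⟩
    · intro i; rw [happ i]
      exact add_nonneg (mul_nonneg hp (ha0 i)) (mul_nonneg hq (hc0 i))
    · intro i j hij; rw [happ i, happ j]
      exact add_le_add (mul_le_mul_of_nonneg_left (ha1 i j hij) hp)
        (mul_le_mul_of_nonneg_left (hc1 i j hij) hq)
    · rw [Finset.sum_congr rfl fun i _ => happ i, Finset.sum_add_distrib,
        ← Finset.mul_sum, ← Finset.mul_sum, ha2, hc2]
      linarith
    · intro y
      have : ∑ i : Fin n, (p • a + q • c) i * (-(orderStat y (i + 1)))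
          = p * (∑ i : Fin n, a i * (-(orderStat y (i + 1))))
            + q * (∑ i : Fin n, c i * (-(orderStat y (i + 1)))) := by
        rw [Finset.mul_sum, Finset.mul_sum, ← Finset.sum_add_distrib]
        refine Finset.sum_congr rfl fun i _ => ?_
        rw [happ i]; ring
      rw [this]
      calc p * (∑ i : Fin n, a i * (-(orderStat y (i + 1))))
            + q * (∑ i : Fin n, c i * (-(orderStat y (i + 1))))
          ≤ p * ρ y + q * ρ y :=
            add_le_add (mul_le_mul_of_nonneg_left (ha3 y) hp)
              (mul_le_mul_of_nonneg_left (hc3 y) hq)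
        _ = ρ y := by rw [← add_mul, hpq, one_mul]
  refine ⟨Ms, hne, hconv, fun a ha => ⟨ha.1, ha.2.1, ha.2.2.1⟩, ?_⟩
  intro x
  set w : Fin n → ℝ := x ∘ Tuple.sort x with hw_def
  have hwmono : Monotone w := Tuple.monotone_sort x
  have hos : ∀ i : Fin n, orderStat x (i + 1) = w i := by
    intro i
    rw [← orderStat_comp_perm x (Tuple.sort x)]
    exact orderStat_monotone_eq _ hwmono i
  have hρw : ρ w = ρ x := h_law x (Tuple.sort x)
  by_cases hw : w = 0
  · obtain ⟨a, haM⟩ := hne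
    refine ⟨a, haM, ?_, fun b hb => hb.2.2.2 x⟩
    have hx0 : ρ x = 0 := by rw [← hρw, hw, hρ0]
    rw [hx0]
    symm
    apply Finset.sum_eq_zero
    intro i _
    rw [hos i, hw]
    simp
  · obtain ⟨b, hbM, hbeq⟩ := key w hwmono hw
    refine ⟨b, hbM, ?_, fun c hc => hc.2.2.2 x⟩
    rw [← hρw, hbeq]
    refine Finset.sum_congr rfl fun i _ => ?_
    rw [hos i, orderStat_monotone_eq w hwmono i]
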